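/- Define p(K) for K ∈ ℝ by: p(K) = (2/(a√(−K)))·arcsinh((2/√3)·sinh(a√(−K)/2)) for K < 0, p(0) = 2/√3, and p(K) = (2/(a√K))·arcsin((2/√3)·sin(a√K/2)) for K > 0 (with a√K < 2π/3), for a fixed a > 0. Then p is continuous and strictly increasing on its domain, hence injective. -/

import Mathlib

open Real Set Filter Topology

/-- The persistence ratio of an equilateral triangle of side `a` on the surface of constant
curvature `K`, as a function of `K`. -/
noncomputable def persistenceRatio (a K : ℝ) : ℝ :=
  if K < 0 then
    (2 / (a * Real.sqrt (-K))) * Real.arsinh ((2 / Real.sqrt 3) * Real.sinh (a * Real.sqrt (-K) / 2))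
  else if K = 0 then 2 / Real.sqrt 3
  else (2 / (a * Real.sqrt K)) * Real.arcsin ((2 / Real.sqrt 3) * Real.sin (a * Real.sqrt K / 2))


noncomputable def phiP (z : ℝ) : ℝ := Real.arcsin ((2 / Real.sqrt 3) * Real.sin z)
noncomputable def psiP (w : ℝ) : ℝ := Real.arsinh ((2 / Real.sqrt 3) * Real.sinh w)

lemma sqrt3_pos : (0:ℝ) < Real.sqrt 3 := Real.sqrt_pos.2 (by norm_num)

lemma cQ_sq : (2 / Real.sqrt 3) ^ 2 = 4 / 3 := by
  rw [div_pow, Real.sq_sqrt (by norm_num : (0:ℝ) ≤ 3)]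
  norm_num

lemma phiP_zero : phiP 0 = 0 := by simp [phiP]
lemma psiP_zero : psiP 0 = 0 := by simp [psiP]

lemma sin_bound {z : ℝ} (h0 : 0 ≤ z) (h1 : z < π / 3) :
    (2 / Real.sqrt 3) * Real.sin z < 1 := by
  have hpi := Real.pi_pos
  have hs : Real.sin z < Real.sin (π / 3) :=
    Real.strictMonoOn_sin ⟨by linarith, by linarith⟩ ⟨by linarith, by linarith⟩ h1
  rw [Real.sin_pi_div_three] at hs
  have h3 : Real.sqrt 3 ≠ 0 := ne_of_gt sqrt3_pos
  have key : (2 / Real.sqrt 3) * (Real.sqrt 3 / 2) = 1 := by field_simp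
  calc (2 / Real.sqrt 3) * Real.sin z < (2 / Real.sqrt 3) * (Real.sqrt 3 / 2) := by
        apply mul_lt_mul_of_pos_left hs (by positivity)
    _ = 1 := key

lemma sin_arg_nonneg {z : ℝ} (h0 : 0 ≤ z) (h1 : z < π / 3) :
    0 ≤ (2 / Real.sqrt 3) * Real.sin z := by
  have hpi := Real.pi_pos
  have : 0 ≤ Real.sin z := Real.sin_nonneg_of_nonneg_of_le_pi h0 (by linarith)
  positivity

lemma hasDerivAt_phiP {z : ℝ} (h0 : 0 ≤ z) (h1 : z < π / 3) :
    HasDerivAt phiP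
      ((2 / Real.sqrt 3) * Real.cos z / Real.sqrt (1 - ((2 / Real.sqrt 3) * Real.sin z) ^ 2)) z := by
  have hlt := sin_bound h0 h1
  have hge := sin_arg_nonneg h0 h1
  have h := (Real.hasDerivAt_arcsin (by linarith : (-1:ℝ) < (2 / Real.sqrt 3) * Real.sin z).ne'
      hlt.ne).comp z ((Real.hasDerivAt_sin z).const_mul (2 / Real.sqrt 3))
  refine h.congr_deriv ?_
  ring

lemma hasDerivAt_psiP (w : ℝ) :
    HasDerivAt psiP
      ((2 / Real.sqrt 3) * Real.cosh w / Real.sqrt (1 + ((2 / Real.sqrt 3) * Real.sinh w) ^ 2)) w := by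
  have h := (Real.hasDerivAt_arsinh ((2 / Real.sqrt 3) * Real.sinh w)).comp w
      ((Real.hasDerivAt_sinh w).const_mul (2 / Real.sqrt 3))
  refine h.congr_deriv ?_
  rw [div_eq_mul_inv]
  ring

lemma deriv_phiP {z : ℝ} (h0 : 0 ≤ z) (h1 : z < π / 3) :
    deriv phiP z
      = (2 / Real.sqrt 3) * Real.cos z / Real.sqrt (1 - ((2 / Real.sqrt 3) * Real.sin z) ^ 2) :=
  (hasDerivAt_phiP h0 h1).deriv

lemma deriv_psiP (w : ℝ) :
    deriv psiP w
      = (2 / Real.sqrt 3) * Real.cosh w / Real.sqrt (1 + ((2 / Real.sqrt 3) * Real.sinh w) ^ 2) :=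
  (hasDerivAt_psiP w).deriv

lemma phi_deriv_strictMono : StrictMonoOn (deriv phiP) (Ioo 0 (π / 3)) := by
  have hpi := Real.pi_pos
  intro x hx y hy hxy
  obtain ⟨hx0, hx1⟩ := hx
  obtain ⟨hy0, hy1⟩ := hy
  rw [deriv_phiP hx0.le hx1, deriv_phiP hy0.le hy1]
  have hsx := sin_bound hx0.le hx1
  have hsy := sin_bound hy0.le hy1
  have hgx := sin_arg_nonneg hx0.le hx1
  have hgy := sin_arg_nonneg hy0.le hy1
  have hdx : 0 < Real.sqrt (1 - ((2 / Real.sqrt 3) * Real.sin x) ^ 2) :=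
    Real.sqrt_pos.2 (by nlinarith)
  have hdy : 0 < Real.sqrt (1 - ((2 / Real.sqrt 3) * Real.sin y) ^ 2) :=
    Real.sqrt_pos.2 (by nlinarith)
  have hcx : 0 < Real.cos x := Real.cos_pos_of_mem_Ioo ⟨by linarith, by linarith⟩
  have hcy : 0 < Real.cos y := Real.cos_pos_of_mem_Ioo ⟨by linarith, by linarith⟩
  have hss : Real.sin x < Real.sin y :=
    Real.strictMonoOn_sin ⟨by linarith, by linarith⟩ ⟨by linarith, by linarith⟩ hxy
  have hsx0 : 0 < Real.sin x := Real.sin_pos_of_pos_of_lt_pi hx0 (by linarith)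
  apply lt_of_pow_lt_pow_left₀ 2 (by positivity)
  rw [div_pow, div_pow, Real.sq_sqrt (by nlinarith), Real.sq_sqrt (by nlinarith)]
  rw [div_lt_div_iff₀ (by nlinarith) (by nlinarith)]
  simp only [mul_pow, cQ_sq]
  have hpx := Real.sin_sq_add_cos_sq x
  have hpy := Real.sin_sq_add_cos_sq y
  have hc2 := cQ_sq
  nlinarith [mul_pos (sub_pos.2 hss) (by linarith : (0:ℝ) < Real.sin x + Real.sin y),
    sq_nonneg ((2 / Real.sqrt 3) * Real.sin x), sq_nonneg ((2 / Real.sqrt 3) * Real.sin y)]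

lemma psi_deriv_strictAnti : StrictAntiOn (deriv psiP) (Ioi 0) := by
  intro x hx y hy hxy
  rw [deriv_psiP, deriv_psiP]
  have hss : Real.sinh x < Real.sinh y := Real.sinh_lt_sinh.2 hxy
  have hsx0 : 0 < Real.sinh x := by
    rw [show (0:ℝ) = Real.sinh 0 by simp]; exact Real.sinh_lt_sinh.2 hx
  have hchx : 0 < Real.cosh x := Real.cosh_pos x
  have hchy : 0 < Real.cosh y := Real.cosh_pos y
  have hdx : 0 < Real.sqrt (1 + ((2 / Real.sqrt 3) * Real.sinh x) ^ 2) :=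
    Real.sqrt_pos.2 (by positivity)
  have hdy : 0 < Real.sqrt (1 + ((2 / Real.sqrt 3) * Real.sinh y) ^ 2) :=
    Real.sqrt_pos.2 (by positivity)
  apply lt_of_pow_lt_pow_left₀ 2 (by positivity)
  rw [div_pow, div_pow, Real.sq_sqrt (by positivity), Real.sq_sqrt (by positivity)]
  rw [div_lt_div_iff₀ (by positivity) (by positivity)]
  simp only [mul_pow, cQ_sq]
  have hpx := Real.cosh_sq x
  have hpy := Real.cosh_sq y
  have hc2 := cQ_sq
  nlinarith [mul_pos (sub_pos.2 hss) (by linarith : (0:ℝ) < Real.sinh x + Real.sinh y)]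

lemma phiP_continuous : Continuous phiP :=
  Real.continuous_arcsin.comp (continuous_const.mul Real.continuous_sin)

lemma psiP_continuous : Continuous psiP :=
  Real.continuous_arsinh.comp (continuous_const.mul Real.continuous_sinh)

lemma phi_strictConvex : StrictConvexOn ℝ (Ico 0 (π / 3)) phiP := by
  apply StrictMonoOn.strictConvexOn_of_deriv (convex_Ico _ _) phiP_continuous.continuousOn
  rw [interior_Ico]
  exact phi_deriv_strictMono

lemma psi_strictConcave : StrictConcaveOn ℝ (Ici 0) psiP := by
  apply StrictAntiOn.strictConcaveOn_of_deriv (convex_Ici _) psiP_continuous.continuousOn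
  rw [interior_Ici]
  exact psi_deriv_strictAnti

lemma phi_slope_strictMono {x y : ℝ} (hx : x ∈ Ioo 0 (π / 3)) (hy : y ∈ Ioo 0 (π / 3))
    (h : x < y) : phiP x / x < phiP y / y := by
  have hpi := Real.pi_pos
  have := phi_strictConvex.secant_strict_mono (a := 0)
    ⟨le_refl 0, by linarith⟩ ⟨hx.1.le, hx.2⟩ ⟨hy.1.le, hy.2⟩ hx.1.ne' hy.1.ne' h
  simpa [phiP_zero] using this

lemma psi_slope_strictAnti {x y : ℝ} (hx : 0 < x) (hy : 0 < y) (h : x < y) :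
    psiP y / y < psiP x / x := by
  have := psi_strictConcave.secant_strict_mono (a := 0)
    (mem_Ici.2 (le_refl 0)) (mem_Ici.2 hx.le) (mem_Ici.2 hy.le) hx.ne' hy.ne' h
  simpa [psiP_zero] using this

lemma phi_slope_gt {z : ℝ} (hz : z ∈ Ioo 0 (π / 3)) : 2 / Real.sqrt 3 < phiP z / z := by
  obtain ⟨hz0, hz1⟩ := hz
  obtain ⟨ξ, hξ, hslope⟩ := exists_hasDerivAt_eq_slope phiP
    (fun t => (2 / Real.sqrt 3) * Real.cos t
      / Real.sqrt (1 - ((2 / Real.sqrt 3) * Real.sin t) ^ 2)) hz0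
    phiP_continuous.continuousOn
    (fun t ht => hasDerivAt_phiP ht.1.le (ht.2.trans hz1))
  rw [phiP_zero, sub_zero, sub_zero] at hslope
  rw [← hslope]
  have hpi := Real.pi_pos
  have hξ1 : ξ < π / 3 := hξ.2.trans hz1
  have hs0 : 0 < Real.sin ξ := Real.sin_pos_of_pos_of_lt_pi hξ.1 (by linarith)
  have hlt := sin_bound hξ.1.le hξ1
  have hge := sin_arg_nonneg hξ.1.le hξ1
  have hc : 0 < Real.cos ξ := Real.cos_pos_of_mem_Ioo ⟨by linarith [hξ.1], by linarith⟩
  have hd : 0 < Real.sqrt (1 - ((2 / Real.sqrt 3) * Real.sin ξ) ^ 2) :=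
    Real.sqrt_pos.2 (by nlinarith)
  rw [lt_div_iff₀ hd]
  have hcq : 0 < 2 / Real.sqrt 3 := by positivity
  have hsqlt : Real.sqrt (1 - ((2 / Real.sqrt 3) * Real.sin ξ) ^ 2) < Real.cos ξ := by
    have h1 : Real.sqrt (1 - ((2 / Real.sqrt 3) * Real.sin ξ) ^ 2)
        < Real.sqrt (Real.cos ξ ^ 2) := by
      apply Real.sqrt_lt_sqrt (by nlinarith)
      have hps := Real.sin_sq_add_cos_sq ξ
      have hc2 := cQ_sq
      simp only [mul_pow, cQ_sq]
      nlinarith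
    rwa [Real.sqrt_sq hc.le] at h1
  calc 2 / Real.sqrt 3 * Real.sqrt (1 - ((2 / Real.sqrt 3) * Real.sin ξ) ^ 2)
      < 2 / Real.sqrt 3 * Real.cos ξ := by exact mul_lt_mul_of_pos_left hsqlt hcq
    _ = _ := rfl

lemma psi_slope_lt {w : ℝ} (hw : 0 < w) : psiP w / w < 2 / Real.sqrt 3 := by
  obtain ⟨ξ, hξ, hslope⟩ := exists_hasDerivAt_eq_slope psiP
    (fun t => (2 / Real.sqrt 3) * Real.cosh t
      / Real.sqrt (1 + ((2 / Real.sqrt 3) * Real.sinh t) ^ 2)) hw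
    psiP_continuous.continuousOn (fun t _ => hasDerivAt_psiP t)
  rw [psiP_zero, sub_zero, sub_zero] at hslope
  rw [← hslope]
  have hs0 : 0 < Real.sinh ξ := by
    rw [show (0:ℝ) = Real.sinh 0 by simp]; exact Real.sinh_lt_sinh.2 hξ.1
  have hc : 0 < Real.cosh ξ := Real.cosh_pos ξ
  have hd : 0 < Real.sqrt (1 + ((2 / Real.sqrt 3) * Real.sinh ξ) ^ 2) :=
    Real.sqrt_pos.2 (by positivity)
  rw [div_lt_iff₀ hd]
  have hcq : 0 < 2 / Real.sqrt 3 := by positivity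
  have hsqgt : Real.cosh ξ < Real.sqrt (1 + ((2 / Real.sqrt 3) * Real.sinh ξ) ^ 2) := by
    have h1 : Real.sqrt (Real.cosh ξ ^ 2)
        < Real.sqrt (1 + ((2 / Real.sqrt 3) * Real.sinh ξ) ^ 2) := by
      apply Real.sqrt_lt_sqrt (by positivity)
      have hps := Real.cosh_sq ξ
      have hc2 := cQ_sq
      simp only [mul_pow, cQ_sq]
      nlinarith
    rwa [Real.sqrt_sq hc.le] at h1
  calc 2 / Real.sqrt 3 * Real.cosh ξ
      < 2 / Real.sqrt 3 * Real.sqrt (1 + ((2 / Real.sqrt 3) * Real.sinh ξ) ^ 2) :=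
        mul_lt_mul_of_pos_left hsqgt hcq
    _ = _ := by ring

lemma hasDerivAt_phiP_zero : HasDerivAt phiP (2 / Real.sqrt 3) 0 := by
  have hpi := Real.pi_pos
  have h := hasDerivAt_phiP (le_refl 0) (by linarith)
  simpa using h

lemma hasDerivAt_psiP_zero : HasDerivAt psiP (2 / Real.sqrt 3) 0 := by
  have h := hasDerivAt_psiP 0
  simpa using h

variable {a : ℝ}

lemma p_eq_neg (ha : 0 < a) {K : ℝ} (hK : K < 0) :
    persistenceRatio a K = psiP (a * Real.sqrt (-K) / 2) / (a * Real.sqrt (-K) / 2) := by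
  have hw : (0:ℝ) < a * Real.sqrt (-K) := mul_pos ha (Real.sqrt_pos.2 (by linarith))
  rw [persistenceRatio, if_pos hK, psiP]
  field_simp

lemma p_eq_pos (ha : 0 < a) {K : ℝ} (hK : 0 < K) :
    persistenceRatio a K = phiP (a * Real.sqrt K / 2) / (a * Real.sqrt K / 2) := by
  have hw : (0:ℝ) < a * Real.sqrt K := mul_pos ha (Real.sqrt_pos.2 hK)
  rw [persistenceRatio, if_neg (by linarith), if_neg hK.ne', phiP]
  field_simp

lemma p_eq_zero : persistenceRatio a 0 = 2 / Real.sqrt 3 := by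
  simp [persistenceRatio]

lemma z_mem (ha : 0 < a) {K : ℝ} (hK0 : 0 < K) (hKB : K < (2 * π / (3 * a)) ^ 2) :
    a * Real.sqrt K / 2 ∈ Ioo 0 (π / 3) := by
  have hpi := Real.pi_pos
  have hs : 0 < Real.sqrt K := Real.sqrt_pos.2 hK0
  constructor
  · positivity
  · have h1 : Real.sqrt K < 2 * π / (3 * a) := by
      have := Real.sqrt_lt_sqrt hK0.le hKB
      rwa [Real.sqrt_sq (by positivity)] at this
    have h2 : a * Real.sqrt K < a * (2 * π / (3 * a)) := mul_lt_mul_of_pos_left h1 ha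
    have h3 : a * (2 * π / (3 * a)) = 2 * π / 3 := by
      field_simp
    rw [h3] at h2
    linarith


lemma p_lt_c (ha : 0 < a) {K : ℝ} (hK : K < 0) :
    persistenceRatio a K < 2 / Real.sqrt 3 := by
  rw [p_eq_neg ha hK]
  have : (0:ℝ) < Real.sqrt (-K) := Real.sqrt_pos.2 (by linarith)
  exact psi_slope_lt (by positivity)

lemma c_lt_p (ha : 0 < a) {K : ℝ} (hK0 : 0 < K) (hKB : K < (2 * π / (3 * a)) ^ 2) :
    2 / Real.sqrt 3 < persistenceRatio a K := by
  rw [p_eq_pos ha hK0]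
  exact phi_slope_gt (z_mem ha hK0 hKB)

lemma p_strictMono (ha : 0 < a) :
    StrictMonoOn (persistenceRatio a) (Iio ((2 * π / (3 * a)) ^ 2)) := by
  intro K₁ h₁ K₂ h₂ h
  simp only [mem_Iio] at h₁ h₂
  rcases lt_trichotomy K₂ 0 with h2 | h2 | h2
  · have h1 : K₁ < 0 := h.trans h2
    rw [p_eq_neg ha h1, p_eq_neg ha h2]
    have hw2 : (0:ℝ) < a * Real.sqrt (-K₂) / 2 := by
      have : (0:ℝ) < Real.sqrt (-K₂) := Real.sqrt_pos.2 (by linarith)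
      positivity
    have hw1 : (0:ℝ) < a * Real.sqrt (-K₁) / 2 := by
      have : (0:ℝ) < Real.sqrt (-K₁) := Real.sqrt_pos.2 (by linarith)
      positivity
    have hs : Real.sqrt (-K₂) < Real.sqrt (-K₁) :=
      Real.sqrt_lt_sqrt (by linarith) (by linarith)
    exact psi_slope_strictAnti hw2 hw1 (by nlinarith)
  · subst h2
    rw [p_eq_zero]
    exact p_lt_c ha h
  · rcases lt_trichotomy K₁ 0 with h1 | h1 | h1
    · exact (p_lt_c ha h1).trans (c_lt_p ha h2 h₂)
    · subst h1
      rw [p_eq_zero]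
      exact c_lt_p ha h2 h₂
    · rw [p_eq_pos ha h1, p_eq_pos ha h2]
      have hs : Real.sqrt K₁ < Real.sqrt K₂ := Real.sqrt_lt_sqrt h1.le h
      exact phi_slope_strictMono (z_mem ha h1 h₁) (z_mem ha h2 h₂) (by nlinarith)

lemma tendsto_slope_psi :
    Tendsto (fun w => psiP w / w) (𝓝[≠] (0:ℝ)) (𝓝 (2 / Real.sqrt 3)) := by
  have h := hasDerivAt_psiP_zero
  rw [hasDerivAt_iff_tendsto_slope] at h
  refine h.congr fun y => ?_
  rw [slope_def_field, psiP_zero]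
  ring

lemma tendsto_slope_phi :
    Tendsto (fun z => phiP z / z) (𝓝[≠] (0:ℝ)) (𝓝 (2 / Real.sqrt 3)) := by
  have h := hasDerivAt_phiP_zero
  rw [hasDerivAt_iff_tendsto_slope] at h
  refine h.congr fun y => ?_
  rw [slope_def_field, phiP_zero]
  ring

lemma p_continuousAt_zero (ha : 0 < a) : ContinuousAt (persistenceRatio a) 0 := by
  have hwt : Tendsto (fun K : ℝ => a * Real.sqrt (-K) / 2) (𝓝[<] (0:ℝ)) (𝓝[≠] (0:ℝ)) := by
    rw [tendsto_nhdsWithin_iff]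
    constructor
    · have hc : Continuous (fun K : ℝ => a * Real.sqrt (-K) / 2) :=
        (continuous_const.mul (Real.continuous_sqrt.comp continuous_neg)).div_const 2
      exact (hc.tendsto' 0 0 (by simp)).mono_left nhdsWithin_le_nhds
    · filter_upwards [self_mem_nhdsWithin] with x hx
      have hs : 0 < Real.sqrt (-x) := Real.sqrt_pos.2 (by simpa using hx)
      simp only [mem_compl_iff, mem_singleton_iff]
      positivity
  have hzt : Tendsto (fun K : ℝ => a * Real.sqrt K / 2) (𝓝[>] (0:ℝ)) (𝓝[≠] (0:ℝ)) := by
    rw [tendsto_nhdsWithin_iff]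
    constructor
    · have hc : Continuous (fun K : ℝ => a * Real.sqrt K / 2) :=
        (continuous_const.mul Real.continuous_sqrt).div_const 2
      exact (hc.tendsto' 0 0 (by simp)).mono_left nhdsWithin_le_nhds
    · filter_upwards [self_mem_nhdsWithin] with x hx
      have hs : 0 < Real.sqrt x := Real.sqrt_pos.2 hx
      simp only [mem_compl_iff, mem_singleton_iff]
      positivity
  have hleft : Tendsto (persistenceRatio a) (𝓝[<] (0:ℝ)) (𝓝 (2 / Real.sqrt 3)) := by
    refine (tendsto_slope_psi.comp hwt).congr' ?_
    filter_upwards [self_mem_nhdsWithin] with x hx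
    exact (p_eq_neg ha hx).symm
  have hright : Tendsto (persistenceRatio a) (𝓝[>] (0:ℝ)) (𝓝 (2 / Real.sqrt 3)) := by
    refine (tendsto_slope_phi.comp hzt).congr' ?_
    filter_upwards [self_mem_nhdsWithin] with x hx
    exact (p_eq_pos ha hx).symm
  have hne : Tendsto (persistenceRatio a) (𝓝[≠] (0:ℝ)) (𝓝 (2 / Real.sqrt 3)) := by
    rw [← nhdsLT_sup_nhdsGT, tendsto_sup]
    exact ⟨hleft, hright⟩
  unfold ContinuousAt
  rw [← nhdsNE_sup_pure, tendsto_sup]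
  refine ⟨by rwa [p_eq_zero], tendsto_pure_nhds _ 0⟩

lemma p_continuousOn (ha : 0 < a) :
    ContinuousOn (persistenceRatio a) (Iio ((2 * π / (3 * a)) ^ 2)) := by
  intro K hK
  apply ContinuousAt.continuousWithinAt
  rcases lt_trichotomy K 0 with h1 | h1 | h1
  · have hg : ContinuousAt (fun x : ℝ => (2 / (a * Real.sqrt (-x))) *
        Real.arsinh ((2 / Real.sqrt 3) * Real.sinh (a * Real.sqrt (-x) / 2))) K := by
      have hne : a * Real.sqrt (-K) ≠ 0 :=
        ne_of_gt (mul_pos ha (Real.sqrt_pos.2 (by linarith)))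
      apply ContinuousAt.mul
      · exact ContinuousAt.div continuousAt_const
          (continuous_const.mul (Real.continuous_sqrt.comp continuous_neg)).continuousAt hne
      · exact (Real.continuous_arsinh.comp (continuous_const.mul (Real.continuous_sinh.comp
          ((continuous_const.mul (Real.continuous_sqrt.comp continuous_neg)).div_const
            2)))).continuousAt
    refine hg.congr ?_
    filter_upwards [Iio_mem_nhds h1] with x hx
    rw [persistenceRatio, if_pos (show x < 0 from hx)]
  · subst h1
    exact p_continuousAt_zero ha
  · have hg : ContinuousAt (fun x : ℝ => (2 / (a * Real.sqrt x)) *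
        Real.arcsin ((2 / Real.sqrt 3) * Real.sin (a * Real.sqrt x / 2))) K := by
      have hne : a * Real.sqrt K ≠ 0 := ne_of_gt (mul_pos ha (Real.sqrt_pos.2 h1))
      apply ContinuousAt.mul
      · exact ContinuousAt.div continuousAt_const
          (continuous_const.mul Real.continuous_sqrt).continuousAt hne
      · exact (Real.continuous_arcsin.comp (continuous_const.mul (Real.continuous_sin.comp
          ((continuous_const.mul Real.continuous_sqrt).div_const 2)))).continuousAt
    refine hg.congr ?_
    filter_upwards [Ioi_mem_nhds h1] with x hx
    rw [persistenceRatio, if_neg (not_lt.2 (le_of_lt hx)), if_neg (ne_of_gt hx)]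

/-- For fixed `a > 0`, the persistence ratio `p(K)` is continuous and strictly increasing on its
domain `(−∞, (2π/(3a))²)`, hence injective there. -/
theorem persistenceRatio_continuous_strictMono (a : ℝ) (ha : 0 < a) :
    ContinuousOn (persistenceRatio a) (Set.Iio ((2 * π / (3 * a)) ^ 2)) ∧
    StrictMonoOn (persistenceRatio a) (Set.Iio ((2 * π / (3 * a)) ^ 2)) ∧
    Set.InjOn (persistenceRatio a) (Set.Iio ((2 * π / (3 * a)) ^ 2)) := by
  exact ⟨p_continuousOn ha, p_strictMono ha, (p_strictMono ha).injOn⟩
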